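/- Let τ = a + bi with b > 0 lie in the upper half plane, and let j denote the modular j-function. Then 2πb ≤ log⁺|j(τ)| + 6, where log⁺ x = max(log x, 0). (It suffices to prove this for τ in the standard fundamental domain, where b ≥ √3/2.) -/

import Mathlib

open Real

/-- The nome `q = e^{2πiτ}`. -/
noncomputable def nome (τ : ℂ) : ℂ := Complex.exp (2 * Real.pi * Complex.I * τ)

/-- The modular discriminant `Δ(τ) = (2π)¹² q ∏_{n≥1} (1−qⁿ)²⁴`. -/
noncomputable def modularDelta (τ : ℂ) : ℂ :=
  (2 * Real.pi) ^ 12 * nome τ * ∏' n : ℕ, (1 - nome τ ^ (n + 1)) ^ 24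

/-- The Eisenstein series `g₂(τ) = ((2π)⁴/12)(1 + 240 ∑_{d≥1} ∑_{m≥1} d³ q^{md})`. -/
noncomputable def eisensteinGTwo (τ : ℂ) : ℂ :=
  (2 * Real.pi) ^ 4 / 12 *
    (1 + 240 * ∑' d : ℕ, ∑' m : ℕ, ((d : ℂ) + 1) ^ 3 * nome τ ^ ((m + 1) * (d + 1)))

/-- The modular `j`-function `j(τ) = 1728 g₂(τ)³ / Δ(τ)`. -/
noncomputable def modularJ (τ : ℂ) : ℂ :=
  1728 * eisensteinGTwo τ ^ 3 / modularDelta τ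

lemma abs_nome (τ : ℂ) : ‖nome τ‖ = Real.exp (-(2 * Real.pi * τ.im)) := by
  rw [nome, Complex.norm_exp]
  congr 1
  simp [Complex.mul_re, Complex.mul_im]

lemma exp6 : (300:ℝ) ≤ Real.exp 6 := by
  have h := Real.exp_one_gt_d9
  have h2 : Real.exp 6 = Real.exp 1 ^ 6 := by
    rw [← Real.exp_nat_mul]; norm_num
  rw [h2]
  have : (2.7182818283:ℝ)^6 ≤ Real.exp 1 ^ 6 :=
    pow_le_pow_left₀ (by norm_num) h.le 6
  nlinarith

lemma exp_neg6 : Real.exp (-6) ≤ 1/300 := by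
  rw [Real.exp_neg, inv_le_comm₀ (Real.exp_pos 6) (by norm_num)]
  calc (1/300:ℝ)⁻¹ = 300 := by norm_num
    _ ≤ Real.exp 6 := exp6

lemma inner_bound (q : ℂ) (r : ℝ) (hr0 : 0 < r) (hr1 : r < 1)
    (hqn : ∀ n : ℕ, ‖q ^ (n+1)‖ = r^(n+1))
    (hqn_lt1 : ∀ n : ℕ, r^(n+1) < 1) (d : ℕ) :
    ‖∑' m : ℕ, ((d : ℂ) + 1) ^ 3 * q ^ ((m + 1) * (d + 1))‖
      ≤ ((d:ℝ)+1)^3 * r^(d+1) / (1-r) := by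
  have hxnorm : ‖q ^ (d+1)‖ < 1 := by
    rw [hqn d]; exact hqn_lt1 d
  have hrw : (fun m : ℕ => ((d : ℂ) + 1) ^ 3 * q ^ ((m + 1) * (d + 1)))
      = fun m : ℕ => ((d : ℂ) + 1) ^ 3 * (q ^ (d+1) * (q ^ (d+1)) ^ m) := by
    funext m
    rw [mul_comm (m+1) (d+1), pow_mul]; ring
  rw [hrw]
  have hts : ∑' m : ℕ, ((d : ℂ) + 1) ^ 3 * (q ^ (d+1) * (q ^ (d+1)) ^ m)
      = ((d : ℂ) + 1) ^ 3 * (q ^ (d+1) * (1 - q ^ (d+1))⁻¹) := by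
    rw [tsum_mul_left, tsum_mul_left, tsum_geometric_of_norm_lt_one hxnorm]
  rw [hts, norm_mul, norm_mul, norm_pow, norm_inv]
  have habs1 : ‖(d:ℂ)+1‖ = (d:ℝ)+1 := by
    rw [show ((d:ℂ)+1) = ((d+1 : ℕ) : ℂ) by push_cast; ring, Complex.norm_natCast]
    push_cast; ring
  rw [habs1, hqn d]
  have hden : 1 - r ≤ ‖1 - q ^ (d+1)‖ := by
    have h := norm_sub_le ((1:ℂ) - q^(d+1)) (-(q^(d+1)))
    simp only [sub_neg_eq_add, sub_add_cancel] at h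
    have h2 : ‖-(q^(d+1))‖ = r^(d+1) := by
      rw [norm_neg, hqn d]
    rw [h2] at h
    simp only [norm_one] at h
    nlinarith [pow_le_pow_of_le_one hr0.le hr1.le (show 1 ≤ d+1 by omega), pow_one r]
  have hdenpos : (0:ℝ) < 1 - r := by linarith
  have hinv : (‖1 - q ^ (d+1)‖)⁻¹ ≤ (1-r)⁻¹ := inv_anti₀ hdenpos hden
  have hnn : (0:ℝ) ≤ ((d:ℝ)+1)^3 := by positivity
  have hrp : (0:ℝ) ≤ r^(d+1) := by positivity
  calc ((d:ℝ)+1)^3 * (r^(d+1) * (‖1 - q ^ (d+1)‖)⁻¹)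
      ≤ ((d:ℝ)+1)^3 * (r^(d+1) * (1-r)⁻¹) := by
        apply mul_le_mul_of_nonneg_left _ hnn
        exact mul_le_mul_of_nonneg_left hinv hrp
    _ = ((d:ℝ)+1)^3 * r^(d+1) / (1-r) := by ring

lemma T_bound (q : ℂ) (r : ℝ) (hr0 : 0 < r) (hr1 : r < 1) (hr300 : r ≤ 1/300)
    (hqn : ∀ n : ℕ, ‖q ^ (n+1)‖ = r^(n+1))
    (hqn_lt1 : ∀ n : ℕ, r^(n+1) < 1) :
    240 * ‖∑' d : ℕ, ∑' m : ℕ, ((d : ℂ) + 1) ^ 3 * q ^ ((m + 1) * (d + 1))‖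
      ≤ 248 * r := by
  have hinner := inner_bound q r hr0 hr1 hqn hqn_lt1
  have hrnorm : ‖r‖ < 1 := by rw [Real.norm_eq_abs, abs_of_pos hr0]; exact hr1
  have hg0 : Summable (fun n : ℕ => (n:ℝ)^3 * r^n) :=
    summable_pow_mul_geometric_of_norm_lt_one 3 hrnorm
  have hg : Summable (fun d : ℕ => ((d:ℝ)+1)^3 * r^(d+1)) := by
    have h2 := (summable_nat_add_iff 1).2 hg0
    apply h2.congr
    intro n; push_cast; ring
  have hgdiv : Summable (fun d : ℕ => ((d:ℝ)+1)^3 * r^(d+1) / (1-r)) := hg.div_const _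
  have hnorms : Summable (fun d : ℕ =>
      ‖∑' m : ℕ, ((d : ℂ) + 1) ^ 3 * q ^ ((m + 1) * (d + 1))‖) :=
    Summable.of_nonneg_of_le (fun d => norm_nonneg _) hinner hgdiv
  have hT1 : ‖∑' d : ℕ, ∑' m : ℕ, ((d : ℂ) + 1) ^ 3 * q ^ ((m + 1) * (d + 1))‖
      ≤ ∑' d : ℕ, ((d:ℝ)+1)^3 * r^(d+1) / (1-r) := by
    calc ‖∑' d : ℕ, ∑' m : ℕ, ((d : ℂ) + 1) ^ 3 * q ^ ((m + 1) * (d + 1))‖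
        = ‖∑' d : ℕ, ∑' m : ℕ, ((d : ℂ) + 1) ^ 3 * q ^ ((m + 1) * (d + 1))‖ := by
          rfl
      _ ≤ ∑' d : ℕ, ‖∑' m : ℕ, ((d : ℂ) + 1) ^ 3 * q ^ ((m + 1) * (d + 1))‖ := by
          apply norm_tsum_le_tsum_norm
          exact hnorms
      _ ≤ ∑' d : ℕ, ((d:ℝ)+1)^3 * r^(d+1) / (1-r) := by
          apply Summable.tsum_le_tsum _ _ hgdiv
          · intro d; exact hinner d
          · exact hnorms
  have h8r : 8 * r < 1 := by linarith
  have h8rnn : (0:ℝ) ≤ 8 * r := by linarith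
  have hgeo : Summable (fun d : ℕ => 8*r^2 * (8*r)^d) :=
    (summable_geometric_of_lt_one h8rnn h8r).mul_left _
  have hshift : Summable (fun d : ℕ => ((d:ℝ)+2)^3 * r^(d+2)) := by
    have h2 := (summable_nat_add_iff 2).2 hg0
    apply h2.congr
    intro n; push_cast; ring
  have hterm : ∀ d : ℕ, ((d:ℝ)+2)^3 * r^(d+2) ≤ 8*r^2 * (8*r)^d := by
    intro d
    have h1 : ((d:ℝ)+2) ≤ 2^(d+1) := by
      have h' : (d+2 : ℕ) ≤ 2^(d+1) := Nat.lt_two_pow_self (n := d+1)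
      calc ((d:ℝ)+2) = ((d+2 : ℕ) : ℝ) := by push_cast; ring
        _ ≤ ((2^(d+1) : ℕ) : ℝ) := by exact_mod_cast h'
        _ = 2^(d+1) := by push_cast; ring
    have h2 : ((d:ℝ)+2)^3 ≤ (2^(d+1))^3 := pow_le_pow_left₀ (by positivity) h1 3
    have h3 : ((2:ℝ)^(d+1))^3 = 8^(d+1) := by
      rw [← pow_mul, mul_comm, pow_mul]; norm_num
    have h4 : ((d:ℝ)+2)^3 ≤ 8^(d+1) := by rw [← h3]; exact h2
    calc ((d:ℝ)+2)^3 * r^(d+2) ≤ 8^(d+1) * r^(d+2) :=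
          mul_le_mul_of_nonneg_right h4 (by positivity)
      _ = 8*r^2 * (8*r)^d := by rw [mul_pow]; ring
  have hS' : ∑' d : ℕ, ((d:ℝ)+1)^3 * r^(d+1) ≤ r + 8*r^2 / (1 - 8*r) := by
    rw [Summable.tsum_eq_zero_add hg]
    have hgeoval : ∑' d : ℕ, 8*r^2 * (8*r)^d = 8*r^2 / (1 - 8*r) := by
      rw [tsum_mul_left, tsum_geometric_of_lt_one h8rnn h8r]
      field_simp
    have htail : ∑' d : ℕ, ((↑(d+1):ℝ)+1)^3 * r^((d+1)+1) ≤ 8*r^2 / (1 - 8*r) := by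
      rw [← hgeoval]
      apply Summable.tsum_le_tsum _ _ hgeo
      · intro d
        have := hterm d
        push_cast
        push_cast at this
        exact le_of_eq_of_le (by ring) this
      · apply hshift.congr; intro n; push_cast; ring
    have h0 : ((0:ℝ)+1)^3 * r^(0+1) = r := by norm_num
    push_cast
    push_cast at htail h0
    nlinarith [htail]
  have hTb : ‖∑' d : ℕ, ∑' m : ℕ, ((d : ℂ) + 1) ^ 3 * q ^ ((m + 1) * (d + 1))‖
      ≤ (r + 8*r^2 / (1 - 8*r)) / (1-r) := by
    rw [tsum_div_const] at hT1
    apply le_trans hT1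
    apply div_le_div_of_nonneg_right hS' (by linarith)
  have h1r : (0:ℝ) < 1 - r := by linarith
  have h18r : (0:ℝ) < 1 - 8*r := by linarith
  have hfrac : 8*r^2 / (1 - 8*r) ≤ 8.3*r^2 := by
    rw [div_le_iff₀ h18r]; nlinarith
  have key : (r + 8*r^2 / (1 - 8*r)) / (1-r) ≤ (248/240) * r := by
    rw [div_le_iff₀ h1r]; nlinarith [hfrac]
  linarith [hTb]

lemma prod_bound (q : ℂ) (r : ℝ) (hr0 : 0 < r) (hr1 : r < 1) (hr300 : r ≤ 1/300)
    (hqn : ∀ n : ℕ, ‖q ^ (n+1)‖ = r^(n+1))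
    (hqn_le : ∀ n : ℕ, r^(n+1) ≤ r) :
    ∃ P : ℝ, ‖∏' n : ℕ, (1 - q ^ (n + 1)) ^ 24‖ = P ∧ 0 < P ∧ P ≤ 12/11 := by
  set u : ℕ → ℂ := fun n => 1 - q ^ (n + 1) with hu
  have hul : ∀ n, 1 - r^(n+1) ≤ ‖u n‖ := by
    intro n
    have h := norm_sub_le ((1:ℂ) - q^(n+1)) (-(q^(n+1)))
    simp only [sub_neg_eq_add, sub_add_cancel, norm_one] at h
    have h2 : ‖-(q^(n+1))‖ = r^(n+1) := by
      rw [norm_neg, hqn n]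
    rw [h2] at h
    simp only [hu]
    linarith
  have huu : ∀ n, ‖u n‖ ≤ 1 + r^(n+1) := by
    intro n
    have h := norm_sub_le (1:ℂ) (q^(n+1))
    simp only [norm_one, hqn n] at h
    simpa only [hu] using h
  have hupos : ∀ n, 0 < ‖u n‖ := by
    intro n
    have := hul n
    have h1 : r^(n+1) ≤ r := hqn_le n
    nlinarith
  have hu0 : ∀ n, u n ≠ 0 := by
    intro n h
    have := hupos n
    rw [h, norm_zero] at this
    exact lt_irrefl 0 this
  have hlogu : Summable (fun n => Complex.log (u n)) := by
    apply Summable.of_norm_bounded (g := fun n => 3/2 * r^(n+1))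
    · apply Summable.mul_left
      exact (summable_nat_add_iff 1).2 (summable_geometric_of_lt_one hr0.le hr1)
    · intro n
      have h : u n = 1 + (-(q^(n+1))) := by rw [hu]; ring
      rw [h]
      have hz : ‖-(q^(n+1))‖ ≤ 1/2 := by
        rw [norm_neg, hqn n]
        have := hqn_le n
        linarith
      calc ‖Complex.log (1 + -(q^(n+1)))‖ ≤ 3/2 * ‖-(q^(n+1))‖ :=
            Complex.norm_log_one_add_half_le_self hz
        _ = 3/2 * r^(n+1) := by rw [norm_neg, hqn n]
  have hmu : Multipliable u :=
    Complex.multipliable_of_summable_log hlogu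
  have hmu24 : Multipliable (fun n => u n ^ 24) := by
    have := hmu.map (powMonoidHom 24 : ℂ →* ℂ) (continuous_pow 24)
    simpa [Function.comp_def, powMonoidHom] using this
  have habsprod : ‖∏' n : ℕ, (1 - q ^ (n + 1)) ^ 24‖
      = ∏' n : ℕ, ‖u n‖ ^ 24 := by
    rw [show (fun n : ℕ => (1 - q ^ (n + 1)) ^ 24) = fun n => u n ^ 24 from rfl]
    rw [hmu24.norm_tprod]
    simp [norm_pow]
  have hlogle : ∀ n, Real.log (‖u n‖) ≤ r^(n+1) := by
    intro n
    calc Real.log (‖u n‖) ≤ ‖u n‖ - 1 :=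
          Real.log_le_sub_one_of_pos (hupos n)
      _ ≤ r^(n+1) := by have := huu n; linarith
  have hlogge : ∀ n, -(2*r^(n+1)) ≤ Real.log (‖u n‖) := by
    intro n
    have hx : r^(n+1) ≤ 1/300 := le_trans (hqn_le n) hr300
    have hxpos : 0 < r^(n+1) := pow_pos hr0 _
    rw [Real.le_log_iff_exp_le (hupos n)]
    have h1 : Real.exp (-(2*r^(n+1))) ≤ 1/(1+2*r^(n+1)) := by
      rw [Real.exp_neg]
      have h2 := Real.add_one_le_exp (2*r^(n+1))
      rw [div_eq_inv_mul, mul_one]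
      apply inv_anti₀ (by linarith) (by linarith)
    have h2 : 1/(1+2*r^(n+1)) ≤ 1 - r^(n+1) := by
      rw [div_le_iff₀ (by linarith)]
      nlinarith
    linarith [hul n]
  have hlogsum : Summable (fun n => Real.log (‖u n‖)) := by
    apply Summable.of_norm_bounded (g := fun n => 2 * r^(n+1))
    · apply Summable.mul_left
      exact (summable_nat_add_iff 1).2 (summable_geometric_of_lt_one hr0.le hr1)
    · intro n
      rw [Real.norm_eq_abs, abs_le]
      constructor
      · linarith [hlogge n]
      · have : (0:ℝ) < r^(n+1) := pow_pos hr0 _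
        linarith [hlogle n]
  have hlogv : Summable (fun n => Real.log (‖u n‖ ^ 24)) := by
    have := hlogsum.mul_left (24:ℝ)
    apply this.congr
    intro n
    rw [Real.log_pow]
    norm_num
  have hPexp : (∏' n : ℕ, ‖u n‖ ^ 24)
      = Real.exp (∑' n : ℕ, Real.log (‖u n‖ ^ 24)) := by
    have := Real.rexp_tsum_eq_tprod (f := fun n => ‖u n‖ ^ 24)
      (fun n => pow_pos (hupos n) 24) hlogv
    exact this.symm
  refine ⟨∏' n : ℕ, ‖u n‖ ^ 24, habsprod, by rw [hPexp]; exact Real.exp_pos _, ?_⟩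
  have hsum_le : ∑' n : ℕ, Real.log (‖u n‖ ^ 24) ≤ 1/12 := by
    have hb : Summable (fun n : ℕ => 24 * r^(n+1)) := by
      apply Summable.mul_left
      exact (summable_nat_add_iff 1).2 (summable_geometric_of_lt_one hr0.le hr1)
    have h1 : ∑' n : ℕ, Real.log (‖u n‖ ^ 24) ≤ ∑' n : ℕ, 24 * r^(n+1) := by
      apply Summable.tsum_le_tsum _ hlogv hb
      intro n
      rw [Real.log_pow]
      push_cast
      nlinarith [hlogle n]
    have h2 : ∑' n : ℕ, 24 * r^(n+1) = 24 * (r / (1-r)) := by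
      have he : ∀ n : ℕ, 24 * r^(n+1) = (24*r) * r^n := by intro n; ring
      rw [tsum_congr he, tsum_mul_left, tsum_geometric_of_lt_one hr0.le hr1]
      field_simp
    rw [h2] at h1
    have h3 : r / (1-r) ≤ (1/300)/(1-1/300) :=
      div_le_div₀ (by norm_num) hr300 (by linarith) (by linarith)
    apply le_trans h1
    rw [div_eq_mul_inv] at h3 ⊢
    nlinarith [h3]
  rw [hPexp]
  have hle : Real.exp (∑' n : ℕ, Real.log (‖u n‖ ^ 24)) ≤ Real.exp (1/12) :=
    Real.exp_le_exp.2 hsum_le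
  have hexp : Real.exp (1/12:ℝ) ≤ 12/11 := by
    have h := Real.add_one_le_exp (-(1/12):ℝ)
    have h2 : Real.exp (1/12:ℝ) = (Real.exp (-(1/12):ℝ))⁻¹ := by
      rw [← Real.exp_neg]; norm_num
    rw [h2, inv_le_comm₀ (Real.exp_pos _) (by norm_num)]
    linarith
  linarith

lemma auxj (x A n p : ℝ) (hx : x ≠ 0) :
    1728 * (x^4/12 * A)^3 / (x^12 * n * p) = A^3/(n*p) := by
  have h : 1728 * (x^4/12 * A)^3 = x^12 * A^3 := by ring
  rw [h, mul_assoc, mul_div_mul_left _ _ (pow_ne_zero 12 hx)]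

lemma abs_modularJ (τ : ℂ) :
    ‖modularJ τ‖
      = ‖1 + 240 * ∑' d : ℕ, ∑' m : ℕ,
          ((d : ℂ) + 1) ^ 3 * nome τ ^ ((m + 1) * (d + 1))‖ ^ 3
        / (‖nome τ‖ * ‖∏' n : ℕ, (1 - nome τ ^ (n + 1)) ^ 24‖) := by
  rw [modularJ, eisensteinGTwo, modularDelta]
  simp only [norm_div, norm_mul, norm_pow]
  have h2 : ‖(2:ℂ)‖ = 2 := by simp
  have hpi : ‖(Real.pi : ℂ)‖ = Real.pi := by
    rw [Complex.norm_real, Real.norm_eq_abs, abs_of_pos Real.pi_pos]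
  have h12 : ‖(12:ℂ)‖ = 12 := by
    rw [show (12:ℂ) = ((12:ℝ):ℂ) by norm_num, Complex.norm_real]; norm_num
  have h1728 : ‖(1728:ℂ)‖ = 1728 := by
    rw [show (1728:ℂ) = ((1728:ℝ):ℂ) by norm_num, Complex.norm_real]; norm_num
  rw [h2, hpi, h12, h1728]
  exact auxj (2*Real.pi) _ _ _ (by positivity)

/-- for `τ = a + bi` in the standard fundamental domain,
`2πb ≤ log⁺|j(τ)| + 6`. -/
theorem two_pi_im_le_log_j (τ : ℂ) (him : 0 < τ.im)
    (hre : |τ.re| ≤ 1 / 2) (habs : 1 ≤ ‖τ‖) :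
    2 * Real.pi * τ.im ≤ max (Real.log (‖modularJ τ‖)) 0 + 6 := by
  by_cases h6 : 2 * Real.pi * τ.im ≤ 6
  · have h0 : (0:ℝ) ≤ max (Real.log (‖modularJ τ‖)) 0 := le_max_right _ _
    linarith
  push_neg at h6
  set r : ℝ := ‖nome τ‖ with hrdef
  have hr_exp : r = Real.exp (-(2 * Real.pi * τ.im)) := abs_nome τ
  have hr0 : 0 < r := by rw [hr_exp]; exact Real.exp_pos _
  have hr300 : r ≤ 1/300 := by
    rw [hr_exp]
    have h1 : Real.exp (-(2*Real.pi*τ.im)) ≤ Real.exp (-6) :=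
      Real.exp_le_exp.2 (by linarith)
    linarith [exp_neg6]
  have hr1 : r < 1 := by linarith
  have hqn : ∀ n : ℕ, ‖nome τ ^ (n+1)‖ = r^(n+1) := fun n => by
    rw [norm_pow, hrdef]
  have hqn_le : ∀ n : ℕ, r^(n+1) ≤ r := fun n => by
    calc r^(n+1) ≤ r^1 := pow_le_pow_of_le_one hr0.le hr1.le (by omega)
      _ = r := pow_one r
  have hqn_lt1 : ∀ n : ℕ, r^(n+1) < 1 := fun n => lt_of_le_of_lt (hqn_le n) hr1
  -- the T bound
  have hT := T_bound (nome τ) r hr0 hr1 hr300 hqn hqn_lt1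
  set T : ℂ := ∑' d : ℕ, ∑' m : ℕ, ((d : ℂ) + 1) ^ 3 * nome τ ^ ((m + 1) * (d + 1)) with hTdef
  have hA : 13/75 ≤ ‖1 + 240 * T‖ := by
    have h := norm_sub_le ((1:ℂ) + 240 * T) (240 * T)
    simp only [add_sub_cancel_right, norm_one] at h
    have h240 : ‖240 * T‖ = 240 * ‖T‖ := by
      rw [norm_mul, show (240:ℂ) = ((240:ℝ):ℂ) by norm_num, Complex.norm_real]
      norm_num
    rw [h240] at h
    have : 240 * ‖T‖ ≤ 248 * r := hT
    nlinarith [hr300]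
  obtain ⟨P, hPeq, hP0, hPle⟩ := prod_bound (nome τ) r hr0 hr1 hr300 hqn hqn_le
  have habsj : ‖modularJ τ‖ = ‖1 + 240 * T‖ ^ 3 / (r * P) := by
    rw [abs_modularJ τ, ← hTdef, ← hrdef, hPeq]
  -- main inequality
  have hAP : (1:ℝ)/300 ≤ ‖1 + 240 * T‖ ^ 3 / P := by
    have h1 : ((13:ℝ)/75)^3 / (12/11) ≤ ‖1 + 240 * T‖ ^ 3 / P :=
      div_le_div₀ (by positivity) (pow_le_pow_left₀ (by norm_num) hA 3) hP0 hPle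
    have h2 : (1:ℝ)/300 ≤ ((13:ℝ)/75)^3 / (12/11) := by norm_num
    linarith
  have hexp2 : Real.exp (2 * Real.pi * τ.im - 6) ≤ ‖modularJ τ‖ := by
    have heq : Real.exp (2 * Real.pi * τ.im - 6) = Real.exp (-6) / r := by
      rw [hr_exp, ← Real.exp_sub]
      ring_nf
    rw [heq, habsj]
    have h1 : Real.exp (-6) ≤ ‖1 + 240 * T‖ ^ 3 / P := le_trans exp_neg6 hAP
    calc Real.exp (-6) / r ≤ (‖1 + 240 * T‖ ^ 3 / P) / r :=
          div_le_div_of_nonneg_right h1 hr0.le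
      _ = ‖1 + 240 * T‖ ^ 3 / (r * P) := by
          rw [div_div, mul_comm P r]
  have hjpos : 0 < ‖modularJ τ‖ := lt_of_lt_of_le (Real.exp_pos _) hexp2
  have hlog : 2 * Real.pi * τ.im - 6 ≤ Real.log (‖modularJ τ‖) :=
    (Real.le_log_iff_exp_le hjpos).2 hexp2
  have hmax := le_max_left (Real.log (‖modularJ τ‖)) (0:ℝ)
  linarith
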